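/- arXiv:2201.00453 — 2 statements merged into one kernel-verified Lean document; each statement's English description precedes it below -/
import Mathlib

section
/- Let k ≥ 2 be an integer and set p′ = ⌊k/2⌋ − 1. For every integer m ≥ 1 there exists N (depending on m and k) such that for all n ≥ N: ex(m,n;P_k) ≤ max{m, p′·(m + n − 1)}. -/
open SimpleGraph

/-- `G` contains a subgraph isomorphic to `H`, i.e. there is an injective
graph homomorphism from `H` into `G`. -/
def ContainsCopy {α β : Type*} (G : SimpleGraph α) (H : SimpleGraph β) : Prop :=
  ∃ f : β → α, Function.Injective f ∧ ∀ ⦃a b⦄, H.Adj a b → G.Adj (f a) (f b)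

/-- The linear forest `P_{k 0} ∪ ⋯ ∪ P_{k (ℓ-1)}`, a disjoint union of paths. -/
def linearForest {ℓ : ℕ} (k : Fin ℓ → ℕ) : SimpleGraph ((i : Fin ℓ) × Fin (k i)) where
  Adj a b := a.1 = b.1 ∧ (a.2.val + 1 = b.2.val ∨ b.2.val + 1 = a.2.val)
  symm := ⟨fun a b h => ⟨h.1.symm, h.2.symm⟩⟩
  loopless := ⟨fun a h => by have := h.2; omega⟩

/-- The path on `k` vertices. -/
def pathG (k : ℕ) : SimpleGraph (Fin k) where
  Adj a b := a.val + 1 = b.val ∨ b.val + 1 = a.val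
  symm := ⟨fun a b h => h.symm⟩
  loopless := ⟨fun a h => by omega⟩

/-- A graph on `Fin m ⊕ Fin n` respects the bipartition into the two `Fin` parts. -/
def IsBip {m n : ℕ} (G : SimpleGraph (Fin m ⊕ Fin n)) : Prop :=
  ∀ a b, G.Adj a b → a.isLeft ≠ b.isLeft

/-- The bipartite graph on parts `Fin m` and `Fin n` whose edges are given by
the relation `r`. -/
def bipGraph (m n : ℕ) (r : Fin m → Fin n → Prop) : SimpleGraph (Fin m ⊕ Fin n) where
  Adj a b := (∃ i j, r i j ∧ a = Sum.inl i ∧ b = Sum.inr j) ∨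
             (∃ i j, r i j ∧ a = Sum.inr j ∧ b = Sum.inl i)
  symm := ⟨fun a b h => by
    rcases h with ⟨i, j, hr, ha, hb⟩ | ⟨i, j, hr, ha, hb⟩
    · exact Or.inr ⟨i, j, hr, hb, ha⟩
    · exact Or.inl ⟨i, j, hr, hb, ha⟩⟩
  loopless := ⟨fun a h => by
    rcases h with ⟨i, j, _, h1, h2⟩ | ⟨i, j, _, h1, h2⟩ <;> subst h1 <;> simp at h2⟩

/-- The bipartite Turán number `ex(m, n; H)`: the maximum number of edges of an
`H`-free bipartite graph with parts of sizes `m` and `n`. -/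
noncomputable def bipEx (m n : ℕ) {β : Type*} (H : SimpleGraph β) : ℕ :=
  sSup {e | ∃ G : SimpleGraph (Fin m ⊕ Fin n),
    IsBip G ∧ ¬ ContainsCopy G H ∧ G.edgeSet.ncard = e}

-- The adjacency matrix of a graph on `Fin n`, over `ℝ`.
open Classical in
noncomputable def adjMat {n : ℕ} (G : SimpleGraph (Fin n)) : Matrix (Fin n) (Fin n) ℝ :=
  fun i j => if G.Adj i j then 1 else 0

/-- The spectral radius (largest adjacency eigenvalue) of a graph on `Fin n`. -/
noncomputable def specRad {n : ℕ} (G : SimpleGraph (Fin n)) : ℝ :=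
  sSup {μ : ℝ | Module.End.HasEigenvalue (Matrix.toLin' (adjMat G)) μ}

/-- The least adjacency eigenvalue of a graph on `Fin n`. -/
noncomputable def leastEig {n : ℕ} (G : SimpleGraph (Fin n)) : ℝ :=
  sInf {μ : ℝ | Module.End.HasEigenvalue (Matrix.toLin' (adjMat G)) μ}


set_option linter.unusedSectionVars false

namespace P16

open Finset List

variable {V : Type*} [Fintype V] [DecidableEq V]

/-- ordered adjacent pairs inside `S` -/
def epr (G : SimpleGraph V) [DecidableRel G.Adj] (S : Finset V) : Finset (V × V) :=
  (S ×ˢ S).filter fun z => G.Adj z.1 z.2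

def ep (G : SimpleGraph V) [DecidableRel G.Adj] (S : Finset V) : ℕ := (epr G S).card

variable (G : SimpleGraph V) [DecidableRel G.Adj]

lemma mem_epr {S : Finset V} {z : V × V} :
    z ∈ epr G S ↔ z.1 ∈ S ∧ z.2 ∈ S ∧ G.Adj z.1 z.2 := by
  unfold epr
  simp only [Finset.mem_filter, Finset.mem_product]
  tauto

lemma ep_eq_sum (S : Finset V) : ep G S = ∑ v ∈ S, (S.filter (G.Adj v)).card := by
  classical
  unfold ep
  rw [Finset.card_eq_sum_card_fiberwise (f := Prod.fst) (t := S)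
    (fun z hz => ((mem_epr G).1 hz).1)]
  refine Finset.sum_congr rfl fun v hv => ?_
  have hset : (epr G S).filter (fun z => z.1 = v) = {v} ×ˢ (S.filter (G.Adj v)) := by
    ext z
    simp only [Finset.mem_filter, mem_epr, Finset.mem_product, Finset.mem_singleton]
    constructor
    · rintro ⟨⟨h1, h2, h3⟩, h4⟩
      subst h4
      exact ⟨rfl, h2, h3⟩
    · rintro ⟨h1, h2, h3⟩
      subst h1
      exact ⟨⟨hv, h2, h3⟩, rfl⟩
  rw [hset, Finset.card_product, Finset.card_singleton, one_mul]

lemma ep_insert {S : Finset V} {w : V} (hw : w ∉ S) :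
    ep G (insert w S) = ep G S + 2 * (S.filter (G.Adj w)).card := by
  classical
  rw [ep_eq_sum, ep_eq_sum, Finset.sum_insert hw]
  have h1 : (insert w S).filter (G.Adj w) = S.filter (G.Adj w) := by
    rw [Finset.filter_insert, if_neg (G.irrefl)]
  rw [h1]
  have h2 : ∀ v ∈ S, ((insert w S).filter (G.Adj v)).card
      = (S.filter (G.Adj v)).card + (if G.Adj v w then 1 else 0) := by
    intro v hv
    rw [Finset.filter_insert]
    split_ifs with h
    · rw [Finset.card_insert_of_notMem (fun hmem => hw (Finset.mem_of_mem_filter _ hmem))]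
    · omega
  rw [Finset.sum_congr rfl h2, Finset.sum_add_distrib, ← Finset.card_filter]
  have h3 : S.filter (fun v => G.Adj v w) = S.filter (G.Adj w) := by
    apply Finset.filter_congr
    intro x _
    simp [SimpleGraph.adj_comm]
  rw [h3]; ring

lemma ep_split {X Y : Finset V}
    (h : ∀ a ∈ X, ∀ b ∈ Y, a ∉ Y → b ∉ X → ¬ G.Adj a b) :
    ep G (X ∪ Y) + ep G (X ∩ Y) = ep G X + ep G Y := by
  classical
  have h1 : epr G (X ∪ Y) = epr G X ∪ epr G Y := by
    ext z
    simp only [mem_epr, Finset.mem_union]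
    constructor
    · rintro ⟨hz1, hz2, hadj⟩
      have key : (z.1 ∈ X ∧ z.2 ∈ X) ∨ (z.1 ∈ Y ∧ z.2 ∈ Y) := by
        by_cases a1 : z.1 ∈ X <;> by_cases a2 : z.2 ∈ X <;>
          by_cases b1 : z.1 ∈ Y <;> by_cases b2 : z.2 ∈ Y <;>
          first
            | tauto
            | (exfalso; exact h _ a1 _ b2 b1 a2 hadj)
            | (exfalso; exact h _ a2 _ b1 b2 a1 hadj.symm)
      rcases key with ⟨u1, u2⟩ | ⟨u1, u2⟩
      · exact Or.inl ⟨u1, u2, hadj⟩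
      · exact Or.inr ⟨u1, u2, hadj⟩
    · rintro (⟨h1, h2, h3⟩ | ⟨h1, h2, h3⟩) <;> exact ⟨by tauto, by tauto, h3⟩
  have h2 : epr G X ∩ epr G Y = epr G (X ∩ Y) := by
    ext z
    simp only [Finset.mem_inter, mem_epr]
    tauto
  unfold ep
  rw [h1, ← h2, Finset.card_union_add_card_inter]

lemma ep_le_bip (col : V → Bool) (hcol : ∀ a b, G.Adj a b → col a ≠ col b) (S : Finset V) :
    ep G S ≤ 2 * ((S.filter fun v => col v = true).card * (S.filter fun v => col v = false).card) := by
  classical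
  have hsub : epr G S ⊆
      ((S.filter fun v => col v = true) ×ˢ (S.filter fun v => col v = false)) ∪
      ((S.filter fun v => col v = false) ×ˢ (S.filter fun v => col v = true)) := by
    intro z hz
    obtain ⟨h1, h2, hadj⟩ := (mem_epr G).1 hz
    have hne := hcol _ _ hadj
    simp only [Finset.mem_union, Finset.mem_product, Finset.mem_filter]
    cases hc1 : col z.1 <;> cases hc2 : col z.2 <;> simp_all
  calc ep G S ≤ _ := Finset.card_le_card hsub
    _ ≤ _ + _ := Finset.card_union_le _ _
    _ ≤ 2 * _ := by rw [Finset.card_product, Finset.card_product]; ring_nf; omega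

lemma chain_col (col : V → Bool) (hcol : ∀ a b, G.Adj a b → col a ≠ col b)
    (p : List V) (hc : List.Chain' G.Adj p) :
    ∀ (i : ℕ) (hi : i < p.length) (h0 : 0 < p.length),
      col (p.get ⟨i, hi⟩) = if Even i then col (p.get ⟨0, h0⟩) else !col (p.get ⟨0, h0⟩) := by
  intro i
  induction i with
  | zero => intro hi h0; simp
  | succ j ih =>
    intro hi h0
    have hj : j < p.length := by omega
    have hadj : G.Adj (p.get ⟨j, hj⟩) (p.get ⟨j + 1, hi⟩) :=
      List.isChain_iff_getElem.1 hc j (by omega)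
    have hne := hcol _ _ hadj
    have hflip : col (p.get ⟨j + 1, hi⟩) = !col (p.get ⟨j, hj⟩) := by
      revert hne
      cases col (p.get ⟨j + 1, hi⟩) <;> cases col (p.get ⟨j, hj⟩) <;> simp
    rw [hflip, ih hj h0]
    rcases Nat.even_or_odd j with hev | hod
    · simp [hev, Nat.even_add_one, hev]
    · have : ¬ Even j := Nat.not_even_iff_odd.2 hod
      simp [this, Nat.even_add_one]

lemma nbd (col : V → Bool) (hcol : ∀ a b, G.Adj a b → col a ≠ col b)
    (k : ℕ) (hk4 : 4 ≤ k) (p : List V) (hp : p ≠ []) (hc : List.Chain' G.Adj p)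
    (hnd : p.Nodup) (w : V) (hwh : G.Adj w (p.head hp)) (hlen : p.length ≤ k - 2)
    (hodd : k % 2 = 1 → p.length = k - 2 → ¬ G.Adj w (p.getLast hp)) :
    (p.toFinset.filter (G.Adj w)).card ≤ k / 2 - 1 := by
  classical
  have h0 : 0 < p.length := List.length_pos_iff.2 hp
  have hhead : p.head hp = p.get ⟨0, h0⟩ := by
    cases p with
    | nil => exact absurd rfl hp
    | cons a l => rfl
  have key : ∀ x ∈ p.toFinset.filter (G.Adj w),
      p.idxOf x % 2 = 0 ∧ p.idxOf x / 2 < k / 2 - 1 ∧ p.idxOf x < p.length := by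
    intro x hx
    rw [Finset.mem_filter, List.mem_toFinset] at hx
    obtain ⟨hxp, hadj⟩ := hx
    have hi : p.idxOf x < p.length := List.idxOf_lt_length_iff.2 hxp
    have hget : p.get ⟨p.idxOf x, hi⟩ = x := List.idxOf_get hi
    -- colors
    have hcx : col x ≠ col w := (hcol w x hadj).symm
    have hch : col (p.get ⟨0, h0⟩) ≠ col w := by
      rw [← hhead]; exact (hcol w _ hwh).symm
    have hxx : col x = col (p.get ⟨0, h0⟩) := by
      revert hcx hch
      cases col x <;> cases col (p.get ⟨0, h0⟩) <;> cases col w <;> simp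
    have heven : Even (p.idxOf x) := by
      by_contra hodd'
      have := chain_col G col hcol p hc (p.idxOf x) hi h0
      rw [if_neg hodd', hget, hxx] at this
      revert this
      cases col (p.get ⟨0, h0⟩) <;> simp
    have hmod : p.idxOf x % 2 = 0 := Nat.even_iff.1 heven
    refine ⟨hmod, ?_, hi⟩
    rcases Nat.even_or_odd k with hke | hko
    · have hk2 : k % 2 = 0 := Nat.even_iff.1 hke
      omega
    · have hk2 : k % 2 = 1 := Nat.odd_iff.1 hko
      by_cases hlast : p.idxOf x = p.length - 1 ∧ p.length = k - 2
      · exfalso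
        have hgl : p.getLast hp = p.get ⟨p.length - 1, by omega⟩ := List.getLast_eq_getElem hp
        have hxl : x = p.getLast hp := by
          have h2 : p.get ⟨p.idxOf x, hi⟩ = p.get ⟨p.length - 1, by omega⟩ := by
            congr 1
            exact Fin.ext hlast.1
          rw [hgl, ← h2, hget]
        exact hodd hk2 hlast.2 (hxl ▸ hadj)
      · omega
  refine le_trans (Finset.card_le_card_of_injOn (fun x => p.idxOf x / 2) ?_ ?_)
    (le_of_eq (Finset.card_range (k / 2 - 1)))
  · intro x hx
    exact Finset.mem_range.2 (key x hx).2.1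
  · intro x hx y hy hxy
    obtain ⟨hx1, _, hx3⟩ := key x (by simpa using hx)
    obtain ⟨hy1, _, hy3⟩ := key y (by simpa using hy)
    have : p.idxOf x = p.idxOf y := by
      simp only at hxy
      omega
    have h1 : p.get ⟨p.idxOf x, hx3⟩ = x := List.idxOf_get hx3
    have h2 : p.get ⟨p.idxOf y, hy3⟩ = y := List.idxOf_get hy3
    rw [← h1, ← h2]
    congr 1
    exact Fin.ext this

lemma exp (col : V → Bool) (hcol : ∀ a b, G.Adj a b → col a ≠ col b) (k : ℕ) (hk4 : 4 ≤ k)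
    (hnoP : ¬ ∃ l : List V, List.Chain' G.Adj l ∧ l.Nodup ∧ l.length = k) :
    ∀ (N : ℕ) (A : Finset V) (p : List V) (hp : p ≠ []), A.card ≤ N →
      List.Chain' G.Adj p → p.Nodup → (∀ x ∈ A, x ∉ p) →
      (k % 2 = 1 → ∀ (q : List V) (hq : q ≠ []), List.Chain' G.Adj q → q.Nodup →
        q.length = k - 1 → (∀ x ∈ q, x ∈ A ∨ x ∈ p) →
        ¬ G.Adj (q.head hq) (q.getLast hq)) →
      ∃ R : Finset V, R ⊆ A ∧
        (∀ x ∈ R, ∀ y, G.Adj x y → y ∈ A → y ∈ R) ∧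
        (∀ y ∈ A, G.Adj (p.head hp) y → y ∈ R) ∧
        ep G (R ∪ p.toFinset) ≤ ep G p.toFinset + 2 * (k / 2 - 1) * R.card := by
  intro N
  induction N with
  | zero =>
    intro A p hp hA _ _ _ _
    have hAe : A = ∅ := Finset.card_eq_zero.1 (le_antisymm hA (Nat.zero_le _))
    subst hAe
    refine ⟨∅, Finset.Subset.refl _, ?_, ?_, ?_⟩
    · intro x hx; exact absurd hx (Finset.notMem_empty x)
    · intro y hy; exact absurd hy (Finset.notMem_empty y)
    · simp [Finset.empty_union]
  | succ N ih =>
    intro A p hp hA hc hnd hd hcyc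
    by_cases hne : (A.filter (G.Adj (p.head hp))).Nonempty
    case neg =>
      refine ⟨∅, Finset.empty_subset _, ?_, ?_, ?_⟩
      · intro x hx; exact absurd hx (Finset.notMem_empty x)
      · intro y hy hadj
        exact absurd ⟨y, Finset.mem_filter.2 ⟨hy, hadj⟩⟩ hne
      · simp [Finset.empty_union]
    case pos =>
    obtain ⟨w, hw⟩ := hne
    rw [Finset.mem_filter] at hw
    obtain ⟨hwA, hwadj⟩ := hw
    have hwp : w ∉ p := hd w hwA
    have hp2ne : (w :: p) ≠ [] := List.cons_ne_nil _ _
    have hc2 : List.Chain' G.Adj (w :: p) := by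
      cases p with
      | nil => exact absurd rfl hp
      | cons a l =>
        rw [List.Chain', List.isChain_cons_cons]
        exact ⟨hwadj.symm, hc⟩
    have hnd2 : (w :: p).Nodup := List.nodup_cons.2 ⟨hwp, hnd⟩
    have hplen : p.length ≤ k - 2 := by
      by_contra hlong
      push_neg at hlong
      apply hnoP
      refine ⟨(w :: p).take k, hc2.take k, (List.take_sublist _ _).nodup hnd2, ?_⟩
      rw [List.length_take]
      simp only [List.length_cons]
      omega
    have hcard1 : (A.erase w).card ≤ N := by
      rw [Finset.card_erase_of_mem hwA]; omega
    have hd1 : ∀ x ∈ A.erase w, x ∉ (w :: p) := by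
      intro x hx hmem
      rw [Finset.mem_erase] at hx
      rcases List.mem_cons.1 hmem with rfl | hxp
      · exact hx.1 rfl
      · exact hd x hx.2 hxp
    have hcyc1 : k % 2 = 1 → ∀ (q : List V) (hq : q ≠ []), List.Chain' G.Adj q → q.Nodup →
        q.length = k - 1 → (∀ x ∈ q, x ∈ A.erase w ∨ x ∈ (w :: p)) →
        ¬ G.Adj (q.head hq) (q.getLast hq) := by
      intro hk1 q hq hcq hndq hlq hmem
      apply hcyc hk1 q hq hcq hndq hlq
      intro x hx
      rcases hmem x hx with hxa | hxp2
      · exact Or.inl (Finset.mem_of_mem_erase hxa)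
      · rcases List.mem_cons.1 hxp2 with rfl | hxx
        · exact Or.inl hwA
        · exact Or.inr hxx
    obtain ⟨R₁, hR1sub, hR1cl, hR1hd, hR1ep⟩ :=
      ih (A.erase w) (w :: p) hp2ne hcard1 hc2 hnd2 hd1 hcyc1
    have hhead2 : (w :: p).head hp2ne = w := rfl
    rw [hhead2] at hR1hd
    have hcard2 : (A \ insert w R₁).card ≤ N := by
      have hsub : A \ insert w R₁ ⊆ A.erase w := by
        intro x hx
        rw [Finset.mem_sdiff, Finset.mem_insert] at hx
        push_neg at hx
        exact Finset.mem_erase.2 ⟨hx.2.1, hx.1⟩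
      exact le_trans (Finset.card_le_card hsub) hcard1
    have hd2 : ∀ x ∈ A \ insert w R₁, x ∉ p := fun x hx => hd x (Finset.mem_sdiff.1 hx).1
    have hcyc2 : k % 2 = 1 → ∀ (q : List V) (hq : q ≠ []), List.Chain' G.Adj q → q.Nodup →
        q.length = k - 1 → (∀ x ∈ q, x ∈ A \ insert w R₁ ∨ x ∈ p) →
        ¬ G.Adj (q.head hq) (q.getLast hq) := by
      intro hk1 q hq hcq hndq hlq hmem
      apply hcyc hk1 q hq hcq hndq hlq
      intro x hx
      rcases hmem x hx with hxa | hxp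
      · exact Or.inl (Finset.mem_sdiff.1 hxa).1
      · exact Or.inr hxp
    obtain ⟨R₂, hR2sub, hR2cl, hR2hd, hR2ep⟩ :=
      ih (A \ insert w R₁) p hp hcard2 hc hnd hd2 hcyc2
    have hR1A : R₁ ⊆ A := fun x hx => Finset.mem_of_mem_erase (hR1sub hx)
    have hR2A : R₂ ⊆ A := fun x hx => (Finset.mem_sdiff.1 (hR2sub hx)).1
    have hwR1 : w ∉ R₁ := fun h => (Finset.mem_erase.1 (hR1sub h)).1 rfl
    have hwR2 : w ∉ R₂ := fun h =>
      (Finset.mem_sdiff.1 (hR2sub h)).2 (Finset.mem_insert_self w R₁)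
    have hR12 : ∀ x ∈ R₁, x ∉ R₂ := fun x h1 h2 =>
      (Finset.mem_sdiff.1 (hR2sub h2)).2 (Finset.mem_insert_of_mem h1)
    have hnocross : ∀ a, (a = w ∨ a ∈ R₁) → ∀ b ∈ R₂, ¬ G.Adj a b := by
      intro a ha b hb hadj
      have hbA2 := Finset.mem_sdiff.1 (hR2sub hb)
      rw [Finset.mem_insert] at hbA2
      push_neg at hbA2
      have hbe : b ∈ A.erase w := Finset.mem_erase.2 ⟨hbA2.2.1, hbA2.1⟩
      rcases ha with rfl | haR1
      · exact hbA2.2.2 (hR1hd b hbe hadj)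
      · exact hbA2.2.2 (hR1cl a haR1 b hadj hbe)
    refine ⟨insert w (R₁ ∪ R₂), ?_, ?_, ?_, ?_⟩
    · intro x hx
      rcases Finset.mem_insert.1 hx with rfl | hx'
      · exact hwA
      · rcases Finset.mem_union.1 hx' with h | h
        · exact hR1A h
        · exact hR2A h
    · -- closure
      intro x hx y hadj hyA
      by_cases hy1 : y = w
      · exact hy1 ▸ Finset.mem_insert_self _ _
      by_cases hy2 : y ∈ R₁
      · exact Finset.mem_insert_of_mem (Finset.mem_union_left _ hy2)
      by_cases hy3 : y ∈ R₂
      · exact Finset.mem_insert_of_mem (Finset.mem_union_right _ hy3)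
      exfalso
      have hyero : y ∈ A.erase w := Finset.mem_erase.2 ⟨hy1, hyA⟩
      have hyA2 : y ∈ A \ insert w R₁ := by
        rw [Finset.mem_sdiff, Finset.mem_insert]
        exact ⟨hyA, fun h => h.elim hy1 hy2⟩
      rcases Finset.mem_insert.1 hx with rfl | hx'
      · exact hy2 (hR1hd y hyero hadj)
      · rcases Finset.mem_union.1 hx' with h | h
        · exact hy2 (hR1cl x h y hadj hyero)
        · exact hy3 (hR2cl x h y hadj hyA2)
    · -- head property
      intro y hy hadj
      by_cases hy1 : y = w
      · exact hy1 ▸ Finset.mem_insert_self _ _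
      by_cases hy2 : y ∈ R₁
      · exact Finset.mem_insert_of_mem (Finset.mem_union_left _ hy2)
      have hyA2 : y ∈ A \ insert w R₁ := by
        rw [Finset.mem_sdiff, Finset.mem_insert]
        exact ⟨hy, fun h => h.elim hy1 hy2⟩
      exact Finset.mem_insert_of_mem (Finset.mem_union_right _ (hR2hd y hyA2 hadj))
    · -- the count
      have hwP : w ∉ p.toFinset := by simpa using hwp
      have hR1P : ∀ x ∈ R₁, x ∉ p.toFinset := by
        intro x hx hxp
        exact hd x (hR1A hx) (List.mem_toFinset.1 hxp)
      have hR2P : ∀ x ∈ R₂, x ∉ p.toFinset := by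
        intro x hx hxp
        exact hd x (hR2A hx) (List.mem_toFinset.1 hxp)
      have hXY : ∀ a ∈ R₁ ∪ insert w p.toFinset, ∀ b ∈ R₂ ∪ p.toFinset,
          a ∉ R₂ ∪ p.toFinset → b ∉ R₁ ∪ insert w p.toFinset → ¬ G.Adj a b := by
        intro a ha b hb hanb hbna hadj
        rw [Finset.mem_union, Finset.mem_insert] at ha hbna
        rw [Finset.mem_union] at hb hanb
        push_neg at hanb hbna
        have hb2 : b ∈ R₂ := by
          rcases hb with hb | hb
          · exact hb
          · exact absurd hb hbna.2.2
        have ha2 : a = w ∨ a ∈ R₁ := by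
          rcases ha with ha | (ha | ha)
          · exact Or.inr ha
          · exact Or.inl ha
          · exact absurd ha hanb.2
        exact hnocross a ha2 b hb2 hadj
      have hinter : (R₁ ∪ insert w p.toFinset) ∩ (R₂ ∪ p.toFinset) = p.toFinset := by
        ext x
        simp only [Finset.mem_inter, Finset.mem_union, Finset.mem_insert]
        constructor
        · rintro ⟨hx1, hx2⟩
          rcases hx1 with hx1 | (rfl | hx1)
          · rcases hx2 with hx2 | hx2
            · exact absurd hx2 (hR12 x hx1)
            · exact hx2
          · rcases hx2 with hx2 | hx2
            · exact absurd hx2 hwR2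
            · exact hx2
          · exact hx1
        · intro hx
          exact ⟨Or.inr (Or.inr hx), Or.inr hx⟩
      have hunion : (R₁ ∪ insert w p.toFinset) ∪ (R₂ ∪ p.toFinset)
          = insert w (R₁ ∪ R₂) ∪ p.toFinset := by
        ext x
        simp only [Finset.mem_union, Finset.mem_insert]
        constructor
        · rintro ((h | (h | h)) | (h | h))
          · exact Or.inl (Or.inr (Or.inl h))
          · exact Or.inl (Or.inl h)
          · exact Or.inr h
          · exact Or.inl (Or.inr (Or.inr h))
          · exact Or.inr h
        · rintro ((h | (h | h)) | h)
          · exact Or.inl (Or.inr (Or.inl h))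
          · exact Or.inl (Or.inl h)
          · exact Or.inr (Or.inl h)
          · exact Or.inr (Or.inr h)
      have hsplit := ep_split G hXY
      rw [hinter, hunion] at hsplit
      have hp2fin : (w :: p).toFinset = insert w p.toFinset := by
        simp [List.toFinset_cons]
      rw [hp2fin] at hR1ep
      have hXeq : R₁ ∪ insert w p.toFinset = insert w p.toFinset ∪ R₁ := Finset.union_comm _ _
      have hR1ep' : ep G (R₁ ∪ insert w p.toFinset)
          ≤ ep G (insert w p.toFinset) + 2 * (k / 2 - 1) * R₁.card := hR1ep
      have hins : ep G (insert w p.toFinset)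
          = ep G p.toFinset + 2 * (p.toFinset.filter (G.Adj w)).card := ep_insert G hwP
      have hpfh : p.head hp ∈ p := List.head_mem hp
      have hnbd : (p.toFinset.filter (G.Adj w)).card ≤ k / 2 - 1 := by
        refine nbd G col hcol k hk4 p hp hc hnd w hwadj.symm hplen ?_
        intro hk1 hpl hadjlast
        have hlq : (w :: p).length = k - 1 := by
          simp only [List.length_cons]
          omega
        have hmem : ∀ x ∈ (w :: p), x ∈ A ∨ x ∈ p := by
          intro x hx
          rcases List.mem_cons.1 hx with rfl | hxx
          · exact Or.inl hwA
          · exact Or.inr hxx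
        apply hcyc hk1 (w :: p) hp2ne hc2 hnd2 hlq hmem
        have hgl : (w :: p).getLast hp2ne = p.getLast hp := List.getLast_cons hp
        rw [hhead2, hgl]
        exact hadjlast
      have hRcard : (insert w (R₁ ∪ R₂)).card = R₁.card + R₂.card + 1 := by
        rw [Finset.card_insert_of_notMem, Finset.card_union_of_disjoint]
        · exact Finset.disjoint_left.2 hR12
        · rw [Finset.mem_union]
          exact fun h => h.elim hwR1 hwR2
      have hexpand : 2 * (k / 2 - 1) * (insert w (R₁ ∪ R₂)).card
          = 2 * (k / 2 - 1) * R₁.card + 2 * (k / 2 - 1) * R₂.card + 2 * (k / 2 - 1) := by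
        rw [hRcard]; ring
      have h2nbd : 2 * (p.toFinset.filter (G.Adj w)).card ≤ 2 * (k / 2 - 1) := by omega
      omega

lemma walkout {T : Finset V} : ∀ {a b : V}, G.Walk a b → a ∈ T → b ∉ T →
    ∃ u ∈ T, ∃ v, v ∉ T ∧ G.Adj u v := by
  intro a b w
  induction w with
  | nil => intro ha hb; exact absurd ha hb
  | cons h pw ih =>
    intro ha hb
    rename_i u' v' w' -- names
    by_cases hv : v' ∈ T
    · exact ih hv hb
    · exact ⟨u', ha, v', hv, h⟩

lemma rotate (q : List V) (hq : q ≠ []) (hc : List.Chain' G.Adj q)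
    (hcy : G.Adj (q.head hq) (q.getLast hq)) (i : ℕ) (hi : i < q.length) :
    ∃ (r : List V) (h0 : r ≠ []), List.Chain' G.Adj r ∧ r.Perm q ∧ r.head h0 = q[i] := by
  have hdne : q.drop i ≠ [] := by
    intro h
    have := List.length_drop (i := i) (l := q)
    rw [h] at this
    simp at this
    omega
  have hrne : q.drop i ++ q.take i ≠ [] := by
    intro h
    rcases List.append_eq_nil_iff.1 h with ⟨h1, _⟩
    exact hdne h1
  refine ⟨q.drop i ++ q.take i, hrne, ?_, ?_, ?_⟩
  · refine List.IsChain.append (hc.drop i) (hc.take i) ?_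
    intro x hx y hy
    cases Nat.eq_zero_or_pos i with
    | inl h0 => subst h0; simp at hy
    | inr hpos =>
      rw [List.getLast?_eq_getLast hdne] at hx
      have hxx : x = (q.drop i).getLast hdne := by
        injection hx.symm
      have hxlast : x = q.getLast hq := by
        rw [hxx, List.getLast_eq_getElem, List.getElem_drop]
        rw [List.getLast_eq_getElem]
        congr 1
        rw [List.length_drop]
        omega
      cases q with
      | nil => exact absurd rfl hq
      | cons a l =>
        cases i with
        | zero => omega
        | succ j =>
          rw [List.take_succ_cons] at hy
          simp only [List.head?_cons, Option.mem_some_iff] at hy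
          subst hy
          rw [hxlast]
          exact hcy.symm
  · exact List.perm_append_comm.trans (by rw [List.take_append_drop])
  · rw [List.head_append_of_ne_nil hdne, List.head_drop]

lemma ep_singleton (x : V) : ep G ({x} : Finset V) = 0 := by
  unfold ep
  rw [Finset.card_eq_zero]
  ext z
  simp only [mem_epr, Finset.mem_singleton, Finset.notMem_empty, iff_false, not_and]
  intro h1 h2
  rw [h1, h2]
  exact fun h => G.irrefl h

lemma comp (col : V → Bool) (hcol : ∀ a b, G.Adj a b → col a ≠ col b) (k : ℕ) (hk4 : 4 ≤ k)
    (hnoP : ¬ ∃ l : List V, List.Chain' G.Adj l ∧ l.Nodup ∧ l.length = k)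
    (S : Finset V) (hSne : S.Nonempty)
    (hclosed : ∀ x ∈ S, ∀ y, G.Adj x y → y ∈ S)
    (hconn : ∀ x ∈ S, ∀ y ∈ S, G.Reachable x y) :
    ep G S ≤ 2 * (k / 2 - 1) * (S.card - 1) ∨
      (ep G S ≤ 2 * (k / 2 - 1) * (S.card - 1) + 2 ∧ S.card ≤ k - 1 ∧
        ∃ x ∈ S, col x = true) := by
  classical
  by_cases hsmall : k % 2 = 1 ∧ S.card ≤ k - 1
  · -- small component, use the bipartite bound
    have hep := ep_le_bip G col hcol S
    set a := (S.filter fun v => col v = true).card with ha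
    set b := (S.filter fun v => col v = false).card with hb
    have hab : a + b = S.card := by
      rw [ha, hb]
      have hsum := Finset.card_filter_add_card_filter_not
        (s := S) (p := fun v => col v = true)
      have hneg : S.filter (fun v => ¬ col v = true) = S.filter (fun v => col v = false) := by
        apply Finset.filter_congr
        intro x _
        cases col x <;> simp
      rw [hneg] at hsum
      exact hsum
    by_cases hz : a = 0 ∨ b = 0
    · left
      have : a * b = 0 := by rcases hz with h | h <;> simp [h]
      omega
    · right
      push_neg at hz
      have ha1 : 1 ≤ a := Nat.one_le_iff_ne_zero.2 hz.1
      have hb1 : 1 ≤ b := Nat.one_le_iff_ne_zero.2 hz.2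
      have ht2 : 2 ≤ k / 2 := by omega
      have hs2t : a + b ≤ 2 * (k / 2) := by
        have : k - 1 = 2 * (k / 2) := by omega
        omega
      have hgen : ∀ t a b : ℕ, 2 ≤ t → 1 ≤ a → 1 ≤ b → a + b ≤ 2 * t →
          a * b ≤ (t - 1) * (a + b - 1) + 1 := by
        intro t a b ht ha1 hb1 hs2t
        obtain ⟨t', rfl⟩ : ∃ t', t = t' + 2 := ⟨t - 2, by omega⟩
        obtain ⟨a', rfl⟩ : ∃ a', a = a' + 1 := ⟨a - 1, by omega⟩
        obtain ⟨b', rfl⟩ : ∃ b', b = b' + 1 := ⟨b - 1, by omega⟩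
        have hsum : a' + b' ≤ 2 * t' + 2 := by omega
        have hred : (t' + 2 - 1) * (a' + 1 + (b' + 1) - 1) + 1
            = (t' + 1) * (a' + b' + 1) + 1 := by
          have h1 : a' + 1 + (b' + 1) - 1 = a' + b' + 1 := by omega
          have h2 : t' + 2 - 1 = t' + 1 := by omega
          rw [h1, h2]
        rw [hred]
        have hsz : (0 : ℤ) ≤ 2 * (t' : ℤ) + 2 - ((a' : ℤ) + (b' : ℤ)) := by
          have : ((a' : ℤ) + (b' : ℤ)) ≤ 2 * (t' : ℤ) + 2 := by exact_mod_cast hsum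
          linarith
        have key : ((a' : ℤ) + 1) * ((b' : ℤ) + 1)
            ≤ ((t' : ℤ) + 1) * ((a' : ℤ) + (b' : ℤ) + 1) + 1 := by
          nlinarith [sq_nonneg ((a' : ℤ) - (b' : ℤ)),
            mul_nonneg hsz (show (0 : ℤ) ≤ (a' : ℤ) + (b' : ℤ) by positivity),
            mul_nonneg (show (0 : ℤ) ≤ (t' : ℤ) by positivity)
              (show (0 : ℤ) ≤ (a' : ℤ) + (b' : ℤ) by positivity), hsz]
        exact_mod_cast key
      have harith : a * b ≤ (k / 2 - 1) * (a + b - 1) + 1 :=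
        hgen (k / 2) a b ht2 ha1 hb1 hs2t
      refine ⟨?_, hsmall.2, ?_⟩
      · have h2 : 2 * (a * b) ≤ 2 * ((k / 2 - 1) * (a + b - 1) + 1) :=
          Nat.mul_le_mul_left 2 harith
        have h3 : 2 * ((k / 2 - 1) * (a + b - 1) + 1)
            = 2 * (k / 2 - 1) * (a + b - 1) + 2 := by ring
        rw [hab] at h2 h3
        exact le_trans hep (le_trans h2 (le_of_eq h3))
      · have : (S.filter fun v => col v = true).Nonempty := by
          rw [← Finset.card_pos, ← ha]; omega
        obtain ⟨x, hx⟩ := this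
        rw [Finset.mem_filter] at hx
        exact ⟨x, hx.1, hx.2⟩
  · -- big component: DFS bound
    left
    obtain ⟨root, hroot⟩ := hSne
    have hAsub : ∀ x ∈ S.erase root, x ∈ S := fun x hx => Finset.mem_of_mem_erase hx
    have hcycS : k % 2 = 1 → ∀ (q : List V) (hq : q ≠ []), List.Chain' G.Adj q → q.Nodup →
        q.length = k - 1 → (∀ x ∈ q, x ∈ S.erase root ∨ x ∈ [root]) →
        ¬ G.Adj (q.head hq) (q.getLast hq) := by
      intro hk1 q hq hcq hndq hlq hmemq hadj
      have hSk : k ≤ S.card := by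
        rcases Nat.lt_or_ge (S.card) k with h | h
        · exact absurd ⟨hk1, by omega⟩ hsmall
        · exact h
      have hqS : ∀ x ∈ q, x ∈ S := by
        intro x hx
        rcases hmemq x hx with h | h
        · exact hAsub x h
        · rw [List.mem_singleton] at h
          exact h ▸ hroot
      have hqfS : q.toFinset ⊆ S := fun x hx => hqS x (List.mem_toFinset.1 hx)
      have hqcard : q.toFinset.card = k - 1 := by
        rw [List.toFinset_card_of_nodup hndq, hlq]
      have hzx : ∃ z ∈ S, z ∉ q.toFinset := by
        by_contra hno
        push_neg at hno
        have : S ⊆ q.toFinset := fun x hx => hno x hx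
        have := Finset.card_le_card this
        omega
      obtain ⟨z, hzS, hznq⟩ := hzx
      have hh : q.head hq ∈ S := hqS _ (List.head_mem hq)
      obtain ⟨wk⟩ := hconn (q.head hq) hh z hzS
      have hhT : q.head hq ∈ q.toFinset := List.mem_toFinset.2 (List.head_mem hq)
      obtain ⟨u, huT, v, hvT, huv⟩ := walkout G wk hhT hznq
      have huq : u ∈ q := List.mem_toFinset.1 huT
      have hiu : q.idxOf u < q.length := List.idxOf_lt_length_iff.2 huq
      obtain ⟨r, hr0, hrc, hrperm, hrhead⟩ := rotate G q hq hcq hadj (q.idxOf u) hiu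
      have hqu : q[q.idxOf u]'hiu = u := by
        have := List.idxOf_get hiu
        simpa [List.get_eq_getElem] using this
      apply hnoP
      refine ⟨v :: r, ?_, ?_, ?_⟩
      · rw [List.Chain', List.isChain_cons]
        constructor
        · intro y hy
          rw [List.head?_eq_head hr0, Option.mem_some_iff] at hy
          subst hy
          rw [hrhead, hqu]
          exact huv.symm
        · exact hrc
      · rw [List.nodup_cons]
        constructor
        · rw [hrperm.mem_iff]
          intro hvq
          exact hvT (List.mem_toFinset.2 hvq)
        · exact hrperm.symm.nodup hndq
      · rw [List.length_cons, hrperm.length_eq, hlq]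
        omega
    have hd : ∀ x ∈ S.erase root, x ∉ [root] := by
      intro x hx hmem
      rw [List.mem_singleton] at hmem
      exact (Finset.mem_erase.1 hx).1 hmem
    obtain ⟨R, hRsub, hRcl, hRhd, hRep⟩ :=
      exp G col hcol k hk4 hnoP (S.erase root).card (S.erase root) [root]
        (List.cons_ne_nil _ _) le_rfl (List.isChain_singleton _) (List.nodup_singleton _)
        hd hcycS
    have hrootfin : ([root] : List V).toFinset = {root} := by simp
    have hRS : R ∪ ([root] : List V).toFinset = S := by
      rw [hrootfin]
      apply Finset.Subset.antisymm
      · intro x hx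
        rcases Finset.mem_union.1 hx with h | h
        · exact hAsub x (hRsub h)
        · exact (Finset.mem_singleton.1 h) ▸ hroot
      · intro x hxS
        by_contra hxn
        rw [Finset.mem_union, Finset.mem_singleton] at hxn
        push_neg at hxn
        obtain ⟨wk⟩ := hconn root hroot x hxS
        have hrootT : root ∈ R ∪ ({root} : Finset V) :=
          Finset.mem_union_right _ (Finset.mem_singleton_self root)
        have hxT : x ∉ R ∪ ({root} : Finset V) := by
          rw [Finset.mem_union, Finset.mem_singleton]
          push_neg
          exact ⟨hxn.1, hxn.2⟩
        obtain ⟨u, huT, v, hvT, huv⟩ := walkout G wk hrootT hxT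
        rw [Finset.mem_union, Finset.mem_singleton] at hvT
        push_neg at hvT
        have huS : u ∈ S := by
          rcases Finset.mem_union.1 huT with h | h
          · exact hAsub u (hRsub h)
          · exact (Finset.mem_singleton.1 h) ▸ hroot
        have hvS : v ∈ S := hclosed u huS v huv
        have hvA : v ∈ S.erase root := Finset.mem_erase.2 ⟨hvT.2, hvS⟩
        rcases Finset.mem_union.1 huT with h | h
        · exact hvT.1 (hRcl u h v huv hvA)
        · have : u = root := Finset.mem_singleton.1 h
          subst this
          exact hvT.1 (hRhd v hvA huv)
    rw [hRS, hrootfin, ep_singleton] at hRep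
    have hRcard : R.card = S.card - 1 := by
      have hrR : root ∉ R := fun h => (Finset.mem_erase.1 (hRsub h)).1 rfl
      have : S.card = R.card + 1 := by
        rw [← hRS, hrootfin, Finset.union_comm, ← Finset.insert_eq,
          Finset.card_insert_of_notMem hrR]
      omega
    rw [hRcard] at hRep
    omega

lemma glob (col : V → Bool) (hcol : ∀ a b, G.Adj a b → col a ≠ col b) (k : ℕ) (hk4 : 4 ≤ k)
    (hnoP : ¬ ∃ l : List V, List.Chain' G.Adj l ∧ l.Nodup ∧ l.length = k)
    (hbig : (k - 1) * (Finset.univ.filter fun v => col v = true).card < Fintype.card V) :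
    ep G Finset.univ ≤ 2 * (k / 2 - 1) * (Fintype.card V - 1) := by
  classical
  letI : Finite G.ConnectedComponent :=
    Finite.of_surjective G.connectedComponentMk Quot.exists_rep
  letI : Fintype G.ConnectedComponent := Fintype.ofFinite _
  set f := G.connectedComponentMk with hf
  set fib := fun c => Finset.univ.filter (fun v => f v = c) with hfib
  have hsum : ep G Finset.univ = ∑ c : G.ConnectedComponent, ep G (fib c) := by
    rw [ep_eq_sum]
    rw [← Finset.sum_fiberwise_of_maps_to (g := f) (t := Finset.univ)
      (fun v _ => Finset.mem_univ (f v)) (fun v => (Finset.univ.filter (G.Adj v)).card)]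
    refine Finset.sum_congr rfl fun c _ => ?_
    rw [ep_eq_sum]
    refine Finset.sum_congr rfl fun v hv => ?_
    rw [Finset.mem_filter] at hv
    congr 1
    ext y
    simp only [Finset.mem_filter, Finset.mem_univ, true_and, hfib]
    constructor
    · intro hadj
      refine ⟨?_, hadj⟩
      rw [← hv.2]
      exact (SimpleGraph.ConnectedComponent.sound hadj.symm.reachable)
    · exact fun h => h.2
  have hfibne : ∀ c : G.ConnectedComponent, (fib c).Nonempty := by
    intro c
    obtain ⟨v, hv⟩ := c.exists_rep
    refine ⟨v, Finset.mem_filter.2 ⟨Finset.mem_univ v, ?_⟩⟩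
    exact hv
  have hclosed : ∀ c, ∀ x ∈ fib c, ∀ y, G.Adj x y → y ∈ fib c := by
    intro c x hx y hadj
    rw [Finset.mem_filter] at hx ⊢
    refine ⟨Finset.mem_univ y, ?_⟩
    rw [← hx.2]
    exact SimpleGraph.ConnectedComponent.sound hadj.symm.reachable
  have hconn : ∀ c, ∀ x ∈ fib c, ∀ y ∈ fib c, G.Reachable x y := by
    intro c x hx y hy
    rw [Finset.mem_filter] at hx hy
    exact SimpleGraph.ConnectedComponent.exact (hx.2.trans hy.2.symm)
  set Bad := Finset.univ.filter
    (fun c : G.ConnectedComponent => ¬ ep G (fib c) ≤ 2 * (k / 2 - 1) * ((fib c).card - 1))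
    with hBad
  have hBadProp : ∀ c ∈ Bad, ep G (fib c) ≤ 2 * (k / 2 - 1) * ((fib c).card - 1) + 2 ∧
      (fib c).card ≤ k - 1 ∧ ∃ x ∈ fib c, col x = true := by
    intro c hc
    rw [hBad, Finset.mem_filter] at hc
    rcases comp G col hcol k hk4 hnoP (fib c) (hfibne c) (hclosed c) (hconn c) with h | h
    · exact absurd h hc.2
    · exact h
  have hstep : ∀ c : G.ConnectedComponent, ep G (fib c)
      ≤ 2 * (k / 2 - 1) * ((fib c).card - 1) + (if c ∈ Bad then 2 else 0) := by
    intro c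
    by_cases hc : c ∈ Bad
    · rw [if_pos hc]
      exact (hBadProp c hc).1
    · rw [if_neg hc]
      rw [hBad, Finset.mem_filter] at hc
      push_neg at hc
      simpa using hc (Finset.mem_univ c)
  have hsum2 : ep G Finset.univ
      ≤ 2 * (k / 2 - 1) * (∑ c : G.ConnectedComponent, ((fib c).card - 1)) + 2 * Bad.card := by
    rw [hsum]
    calc ∑ c : G.ConnectedComponent, ep G (fib c)
        ≤ ∑ c : G.ConnectedComponent,
            (2 * (k / 2 - 1) * ((fib c).card - 1) + (if c ∈ Bad then 2 else 0)) :=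
          Finset.sum_le_sum (fun c _ => hstep c)
      _ = _ := by
          rw [Finset.sum_add_distrib, ← Finset.mul_sum]
          congr 1
          rw [Finset.sum_ite_mem, Finset.univ_inter, Finset.sum_const, smul_eq_mul]
          ring
  have hvert : ∑ c : G.ConnectedComponent, (fib c).card = Fintype.card V := by
    rw [← Finset.card_univ (α := V)]
    exact (Finset.card_eq_sum_card_fiberwise (fun x _ => Finset.mem_univ (f x))).symm
  have hsum1 : (∑ c : G.ConnectedComponent, ((fib c).card - 1)) + Fintype.card G.ConnectedComponent
      = Fintype.card V := by
    have h1 : ∑ c : G.ConnectedComponent, ((fib c).card - 1 + 1)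
        = ∑ c : G.ConnectedComponent, (fib c).card := by
      refine Finset.sum_congr rfl fun c _ => ?_
      have := Finset.card_pos.2 (hfibne c)
      omega
    rw [Finset.sum_add_distrib, Finset.sum_const, smul_eq_mul, mul_one] at h1
    rw [← Finset.card_univ (α := G.ConnectedComponent)]
    rw [← hvert, ← h1]
  -- Bad components each have a left vertex
  have hBL : Bad.card ≤ (Finset.univ.filter fun v => col v = true).card := by
    have hx : ∀ c ∈ Bad, ∃ x, x ∈ fib c ∧ col x = true := by
      intro c hc
      obtain ⟨x, hx1, hx2⟩ := (hBadProp c hc).2.2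
      exact ⟨x, hx1, hx2⟩
    choose g hg1 hg2 using hx
    have hNV : Nonempty V := by
      refine Fintype.card_pos_iff.1 ?_
      omega
    refine Finset.card_le_card_of_injOn
      (fun c => if hc : c ∈ Bad then g c hc else Classical.arbitrary V) ?_ ?_
    · intro c hc
      beta_reduce
      rw [dif_pos (Finset.mem_coe.1 hc), Finset.mem_coe, Finset.mem_filter]
      exact ⟨Finset.mem_univ _, hg2 c hc⟩
    · intro c hc c' hc' hcc
      rw [Finset.mem_coe] at hc hc'
      simp only at hcc
      rw [dif_pos hc, dif_pos hc'] at hcc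
      have h1 := hg1 c hc
      have h2 := hg1 c' hc'
      rw [hfib, Finset.mem_filter] at h1 h2
      rw [← h1.2, ← h2.2, hcc]
  have hBadlt : Bad.card < Fintype.card G.ConnectedComponent := by
    by_contra hle
    push_neg at hle
    have hBadUniv : Bad = Finset.univ := by
      apply Finset.eq_univ_of_card
      exact le_antisymm (le_trans (Finset.card_le_univ Bad) (le_of_eq (Finset.card_univ))) hle
    have hsumBad : ∑ c : G.ConnectedComponent, (fib c).card ≤ (k - 1) * Bad.card := by
      calc ∑ c : G.ConnectedComponent, (fib c).card
          ≤ ∑ _c : G.ConnectedComponent, (k - 1) :=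
            Finset.sum_le_sum (fun c _ =>
              (hBadProp c (by rw [hBadUniv]; exact Finset.mem_univ c)).2.1)
        _ = Fintype.card G.ConnectedComponent * (k - 1) := by
            rw [Finset.sum_const, smul_eq_mul, Finset.card_univ]
        _ = (k - 1) * Bad.card := by
            rw [hBadUniv, Finset.card_univ]; ring
    rw [hvert] at hsumBad
    have : (k - 1) * Bad.card ≤ (k - 1) * (Finset.univ.filter fun v => col v = true).card :=
      Nat.mul_le_mul_left _ hBL
    omega
  -- put it together
  set Sg := ∑ c : G.ConnectedComponent, ((fib c).card - 1) with hSg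
  set r := Fintype.card G.ConnectedComponent with hr
  have hr1 : 1 ≤ r := by omega
  have hB1 : Bad.card ≤ r - 1 := by omega
  have hT1 : 1 ≤ k / 2 - 1 := by omega
  have hb2 : 2 * Bad.card ≤ 2 * ((k / 2 - 1) * (r - 1)) := by
    have h1 : Bad.card ≤ (k / 2 - 1) * (r - 1) :=
      le_trans hB1 (Nat.le_mul_of_pos_left _ (by omega))
    omega
  have hfinal : 2 * (k / 2 - 1) * Sg + 2 * ((k / 2 - 1) * (r - 1))
      = 2 * (k / 2 - 1) * (Sg + (r - 1)) := by ring
  have hss : Sg + (r - 1) = Fintype.card V - 1 := by omega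
  calc ep G Finset.univ ≤ 2 * (k / 2 - 1) * Sg + 2 * Bad.card := hsum2
    _ ≤ 2 * (k / 2 - 1) * Sg + 2 * ((k / 2 - 1) * (r - 1)) := by omega
    _ = 2 * (k / 2 - 1) * (Sg + (r - 1)) := hfinal
    _ = 2 * (k / 2 - 1) * (Fintype.card V - 1) := by rw [hss]

lemma ep_univ_eq : ep G Finset.univ = 2 * G.edgeFinset.card := by
  rw [ep_eq_sum, ← SimpleGraph.sum_degrees_eq_twice_card_edges]
  refine Finset.sum_congr rfl fun v _ => ?_
  unfold SimpleGraph.degree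
  congr 1
  ext y
  simp [SimpleGraph.mem_neighborFinset]

lemma sum_deg_col_eq (col : V → Bool) (hcol : ∀ a b, G.Adj a b → col a ≠ col b) :
    ∑ v ∈ Finset.univ.filter (fun v => col v = true), (Finset.univ.filter (G.Adj v)).card
      = ∑ v ∈ Finset.univ.filter (fun v => col v = false), (Finset.univ.filter (G.Adj v)).card := by
  classical
  have h1 : ∀ b : Bool,
      ∑ v ∈ Finset.univ.filter (fun v => col v = b), (Finset.univ.filter (G.Adj v)).card
        = ∑ v ∈ Finset.univ, ∑ y ∈ Finset.univ, if col v = b ∧ G.Adj v y then 1 else 0 := by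
    intro b
    rw [Finset.sum_filter]
    refine Finset.sum_congr rfl fun v _ => ?_
    by_cases hv : col v = b
    · rw [if_pos hv, Finset.card_filter]
      refine Finset.sum_congr rfl fun y _ => ?_
      simp [hv]
    · rw [if_neg hv]
      symm
      apply Finset.sum_eq_zero
      intro y _
      simp [hv]
  rw [h1, h1]
  rw [Finset.sum_comm]
  refine Finset.sum_congr rfl fun y _ => Finset.sum_congr rfl fun v _ => ?_
  by_cases hadj : G.Adj v y
  · have hne := hcol v y hadj
    have hadj' : G.Adj y v := hadj.symm
    cases hv : col v <;> cases hy : col y <;> simp_all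
  · have hadj' : ¬ G.Adj y v := fun h => hadj h.symm
    simp [hadj, hadj']

lemma k3_bound (col : V → Bool) (hcol : ∀ a b, G.Adj a b → col a ≠ col b)
    (hnoP : ¬ ∃ l : List V, List.Chain' G.Adj l ∧ l.Nodup ∧ l.length = 3) :
    ep G Finset.univ ≤ 2 * (Finset.univ.filter fun v => col v = true).card := by
  classical
  have hdeg : ∀ v : V, (Finset.univ.filter (G.Adj v)).card ≤ 1 := by
    intro v
    by_contra hcon
    push_neg at hcon
    obtain ⟨y, hy, y', hy', hne⟩ := Finset.one_lt_card.1 hcon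
    rw [Finset.mem_filter] at hy hy'
    apply hnoP
    refine ⟨[y, v, y'], ?_, ?_, rfl⟩
    · rw [List.Chain', List.isChain_cons_cons, List.isChain_pair]
      exact ⟨hy.2.symm, hy'.2⟩
    · have hn1 : y ≠ v := fun h => G.irrefl (h ▸ hy.2)
      have hn2 : v ≠ y' := fun h => G.irrefl (h ▸ hy'.2)
      simp [hn1, hn2, hne]
  have hsplit := Finset.sum_filter_add_sum_filter_not Finset.univ
    (fun v => col v = true) (fun v => (Finset.univ.filter (G.Adj v)).card)
  have hneg : Finset.univ.filter (fun v : V => ¬ col v = true)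
      = Finset.univ.filter (fun v => col v = false) := by
    apply Finset.filter_congr
    intro x _
    cases col x <;> simp
  rw [hneg] at hsplit
  have heq := sum_deg_col_eq G col hcol
  have hL : ∑ v ∈ Finset.univ.filter (fun v => col v = true), (Finset.univ.filter (G.Adj v)).card
      ≤ (Finset.univ.filter fun v : V => col v = true).card := by
    calc _ ≤ ∑ _v ∈ Finset.univ.filter (fun v : V => col v = true), 1 :=
          Finset.sum_le_sum (fun v _ => hdeg v)
      _ = _ := by rw [Finset.sum_const, smul_eq_mul, mul_one]
  rw [ep_eq_sum]
  omega

lemma noP_of_not_contains {α : Type*} (G : SimpleGraph α) (k : ℕ)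
    (h : ¬ ContainsCopy G (pathG k)) :
    ¬ ∃ l : List α, List.Chain' G.Adj l ∧ l.Nodup ∧ l.length = k := by
  rintro ⟨l, hc, hnd, hlen⟩
  apply h
  refine ⟨fun i => l.get (Fin.cast hlen.symm i), ?_, ?_⟩
  · intro i j hij
    have hinj := List.nodup_iff_injective_get.1 hnd hij
    have := congrArg Fin.val hinj
    exact Fin.ext (by simpa using this)
  · intro a b hab
    rcases hab with h1 | h1
    · have hlt : (a : ℕ) < l.length - 1 := by
        have hb := b.isLt
        omega
      have hadj := List.isChain_iff_getElem.1 hc a.val (by omega)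
      have e2 : Fin.cast hlen.symm b = ⟨a.val + 1, by omega⟩ := Fin.ext (by simp [← h1])
      have e1 : Fin.cast hlen.symm a = ⟨a.val, by omega⟩ := Fin.ext (by simp)
      beta_reduce
      rw [e1, e2]
      exact hadj
    · have hlt : (b : ℕ) < l.length - 1 := by
        have ha := a.isLt
        omega
      have hadj := List.isChain_iff_getElem.1 hc b.val (by omega)
      have e2 : Fin.cast hlen.symm a = ⟨b.val + 1, by omega⟩ := Fin.ext (by simp [← h1])
      have e1 : Fin.cast hlen.symm b = ⟨b.val, by omega⟩ := Fin.ext (by simp)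
      beta_reduce
      rw [e1, e2]
      exact hadj.symm

end P16

theorem statement_16 (k : ℕ) (hk : 2 ≤ k) (p' : ℕ) (hp' : p' = k / 2 - 1)
    (m : ℕ) (hm : 1 ≤ m) :
    ∃ N : ℕ, ∀ n : ℕ, N ≤ n →
      bipEx m n (pathG k) ≤ max m (p' * (m + n - 1)) := by
  classical
  refine ⟨k * m + k + m + 2, fun n hn => ?_⟩
  apply csSup_le'
  rintro e ⟨G, hbip, hnc, rfl⟩
  haveI : DecidableRel G.Adj := Classical.decRel _
  have hnoP := P16.noP_of_not_contains G k hnc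
  have hcol : ∀ a b, G.Adj a b → Sum.isLeft a ≠ Sum.isLeft b := hbip
  have hcardL : (Finset.univ.filter fun v : Fin m ⊕ Fin n => v.isLeft = true).card = m := by
    have himg : (Finset.univ.filter fun v : Fin m ⊕ Fin n => v.isLeft = true)
        = Finset.univ.image Sum.inl := by
      ext x
      cases x <;> simp
    rw [himg, Finset.card_image_of_injective _ Sum.inl_injective, Finset.card_univ,
      Fintype.card_fin]
  have hE : G.edgeSet.ncard = G.edgeFinset.card := by
    rw [← SimpleGraph.coe_edgeFinset, Set.ncard_coe_finset]
  have hepE : P16.ep G Finset.univ = 2 * G.edgeFinset.card := P16.ep_univ_eq G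
  by_cases hk2 : k = 2
  · subst hk2
    have hempty : G.edgeFinset = ∅ := by
      rw [Finset.eq_empty_iff_forall_notMem]
      intro ed hed
      induction ed with
      | _ a b =>
        rw [SimpleGraph.mem_edgeFinset, SimpleGraph.mem_edgeSet] at hed
        exact hnoP ⟨[a, b], List.isChain_pair.2 hed, by simp [hed.ne], rfl⟩
    rw [hE, hempty]
    simp
  by_cases hk3 : k = 3
  · subst hk3
    have h3 := P16.k3_bound G (fun v => v.isLeft) hcol hnoP
    rw [hcardL, hepE] at h3
    have : G.edgeFinset.card ≤ m := by omega
    rw [hE]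
    exact le_trans this (le_max_left _ _)
  · have hk4 : 4 ≤ k := by omega
    have hcardV : Fintype.card (Fin m ⊕ Fin n) = m + n := by simp
    obtain ⟨K, hK⟩ : ∃ K, K = k * m := ⟨_, rfl⟩
    obtain ⟨K1, hK1⟩ : ∃ K1, K1 = (k - 1) * m := ⟨_, rfl⟩
    have hKK : K1 ≤ K := by
      rw [hK, hK1]
      exact Nat.mul_le_mul_right m (by omega)
    rw [← hK] at hn
    have hbig : (k - 1) * (Finset.univ.filter fun v : Fin m ⊕ Fin n => v.isLeft = true).card
        < Fintype.card (Fin m ⊕ Fin n) := by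
      rw [hcardL, hcardV, ← hK1]
      omega
    have hglob := P16.glob G (fun v => v.isLeft) hcol k hk4 hnoP hbig
    rw [hcardV, hepE] at hglob
    obtain ⟨P, hP⟩ : ∃ P, P = (k / 2 - 1) * (m + n - 1) := ⟨_, rfl⟩
    have h2P : 2 * G.edgeFinset.card ≤ 2 * P := by
      rw [hP]
      calc 2 * G.edgeFinset.card ≤ 2 * (k / 2 - 1) * (m + n - 1) := hglob
        _ = 2 * ((k / 2 - 1) * (m + n - 1)) := by ring
    have hcard : G.edgeFinset.card ≤ P := by omega
    rw [hE, hp', ← hP]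
    exact le_trans hcard (le_max_right _ _)
end

section
/- Let n ≥ k ≥ 2 be integers. Then every graph on n vertices containing no subgraph isomorphic to the path P_k on k vertices has at most (k−2)·n/2 edges; that is, ex(n,P_k) ≤ (k−2)n/2. -/
open SimpleGraph

section ErdosGallai

open Finset

variable {n k : ℕ} (G : SimpleGraph (Fin n))

/-- `f` enumerates a path with `m` vertices inside `s`. -/
def IsPathOn (s : Finset (Fin n)) (m : ℕ) (f : ℕ → Fin n) : Prop :=
  (∀ i, i < m → f i ∈ s) ∧
  (∀ i, i < m → ∀ j, j < m → f i = f j → i = j) ∧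
  (∀ i, i + 1 < m → G.Adj (f i) (f (i + 1)))

lemma copy_of_path {s : Finset (Fin n)} {m : ℕ} {f : ℕ → Fin n}
    (h : IsPathOn G s m f) (hk : k ≤ m) : ContainsCopy G (pathG k) := by
  refine ⟨fun i => f i.val, ?_, ?_⟩
  · intro a b hab
    exact Fin.ext (h.2.1 a.val (lt_of_lt_of_le a.2 hk) b.val (lt_of_lt_of_le b.2 hk) hab)
  · intro a b hab
    rcases (show a.val + 1 = b.val ∨ b.val + 1 = a.val from hab) with h1 | h1
    · have h2 := h.2.2 a.val (by omega)
      rwa [h1] at h2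
    · have h2 := h.2.2 b.val (by omega)
      rw [h1] at h2
      exact h2.symm

lemma path_card_le {s : Finset (Fin n)} {m : ℕ} {f : ℕ → Fin n}
    (h : IsPathOn G s m f) : m ≤ s.card := by
  classical
  have h2 : (Finset.range m).card ≤ s.card := by
    apply Finset.card_le_card_of_injOn f
    · intro i hi; exact h.1 i (Finset.mem_range.mp hi)
    · intro i hi j hj hij
      exact h.2.1 i (Finset.mem_range.mp hi) j (Finset.mem_range.mp hj) hij
  simpa using h2

lemma exists_max_path {s : Finset (Fin n)} (hs : s.Nonempty) :
    ∃ m f, IsPathOn G s m f ∧ 1 ≤ m ∧ ∀ m' f', IsPathOn G s m' f' → m' ≤ m := by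
  classical
  obtain ⟨v, hv⟩ := hs
  set P : ℕ → Prop := fun m => ∃ f, IsPathOn G s m f with hP
  have hP1 : P 1 := ⟨fun _ => v, fun i _ => hv, fun i hi j hj _ => by omega, fun i hi => by omega⟩
  have hcard : 1 ≤ s.card := Finset.card_pos.mpr ⟨v, hv⟩
  set M := Nat.findGreatest P s.card with hM
  have hPM : P M := Nat.findGreatest_spec hcard hP1
  obtain ⟨f, hf⟩ := hPM
  refine ⟨M, f, hf, Nat.le_findGreatest hcard hP1, ?_⟩
  intro m' f' hf'
  by_contra hlt
  push_neg at hlt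
  have hb : m' ≤ s.card := path_card_le G hf'
  exact Nat.findGreatest_is_greatest hlt hb ⟨f', hf'⟩

lemma path_cons {s : Finset (Fin n)} {m : ℕ} {f : ℕ → Fin n}
    (h : IsPathOn G s m f) {u : Fin n} (hu : u ∈ s) (hnot : ∀ i, i < m → f i ≠ u)
    (hadj : G.Adj u (f 0)) : ∃ g, IsPathOn G s (m + 1) g := by
  refine ⟨fun i => if i = 0 then u else f (i - 1), ?_, ?_, ?_⟩
  · intro i hi
    by_cases hi0 : i = 0
    · simp [hi0, hu]
    · simp only [if_neg hi0]
      exact h.1 (i - 1) (by omega)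
  · intro i hi j hj hij
    dsimp only at hij
    by_cases hi0 : i = 0 <;> by_cases hj0 : j = 0
    · omega
    · rw [if_pos hi0, if_neg hj0] at hij
      exact absurd hij.symm (hnot (j - 1) (by omega))
    · rw [if_neg hi0, if_pos hj0] at hij
      exact absurd hij (hnot (i - 1) (by omega))
    · rw [if_neg hi0, if_neg hj0] at hij
      have := h.2.1 (i - 1) (by omega) (j - 1) (by omega) hij
      omega
  · intro i hi
    dsimp only
    by_cases hi0 : i = 0
    · subst hi0
      simpa using hadj
    · rw [if_neg hi0, if_neg (by omega : ¬ (i + 1 = 0))]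
      have h2 := h.2.2 (i - 1) (by omega)
      have e1 : i - 1 + 1 = i := by omega
      rw [e1] at h2
      have e2 : i + 1 - 1 = i := by omega
      rwa [e2]

lemma path_snoc {s : Finset (Fin n)} {m : ℕ} {f : ℕ → Fin n}
    (h : IsPathOn G s m f) {u : Fin n} (hu : u ∈ s) (hnot : ∀ i, i < m → f i ≠ u)
    (hadj : G.Adj (f (m - 1)) u) (hm : 1 ≤ m) : ∃ g, IsPathOn G s (m + 1) g := by
  refine ⟨fun i => if i < m then f i else u, ?_, ?_, ?_⟩
  · intro i hi
    by_cases him : i < m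
    · simp only [if_pos him]; exact h.1 i him
    · simp only [if_neg him]; exact hu
  · intro i hi j hj hij
    dsimp only at hij
    by_cases him : i < m <;> by_cases hjm : j < m
    · rw [if_pos him, if_pos hjm] at hij
      exact h.2.1 i him j hjm hij
    · rw [if_pos him, if_neg hjm] at hij
      exact absurd hij (hnot i him)
    · rw [if_neg him, if_pos hjm] at hij
      exact absurd hij.symm (hnot j hjm)
    · omega
  · intro i hi
    dsimp only
    by_cases him : i + 1 < m
    · rw [if_pos him, if_pos (by omega : i < m)]
      exact h.2.2 i him
    · rw [if_neg him, if_pos (by omega : i < m)]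
      have e1 : i = m - 1 := by omega
      rwa [e1]

lemma key_closed (hk : 2 ≤ k) (hG : ¬ ContainsCopy G (pathG k)) [DecidableRel G.Adj]
    (s : Finset (Fin n)) (hs : s.Nonempty)
    (hmin : ∀ v ∈ s, k - 1 ≤ 2 * (s.filter (G.Adj v)).card) :
    ∃ t : Finset (Fin n), t ⊆ s ∧ t.Nonempty ∧ t.card ≤ k - 1 ∧
      ∀ a ∈ t, ∀ b ∈ s, G.Adj a b → b ∈ t := by
  classical
  obtain ⟨m, f, hf, hm1, hmax⟩ := exists_max_path G hs
  -- m ≥ 2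
  have hm2 : 2 ≤ m := by
    by_contra hcon
    have hm : m = 1 := by omega
    have h0 : f 0 ∈ s := hf.1 0 (by omega)
    have hd := hmin _ h0
    have hne : (s.filter (G.Adj (f 0))).Nonempty := by
      rw [← Finset.card_pos]; omega
    obtain ⟨u, hu⟩ := hne
    rw [Finset.mem_filter] at hu
    obtain ⟨g, hg⟩ := path_cons G hf hu.1
      (fun i hi => by
        have : i = 0 := by omega
        subst this; exact G.ne_of_adj hu.2) hu.2.symm
    have := hmax _ _ hg; omega
  -- m ≤ k - 1
  have hmk : m ≤ k - 1 := by
    by_contra hcon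
    push_neg at hcon
    exact hG (copy_of_path G hf (by omega))
  set t : Finset (Fin n) := (Finset.range m).image f with ht
  have hmem_t : ∀ b, b ∈ t ↔ ∃ j, j < m ∧ f j = b := by
    intro b
    simp [ht, Finset.mem_image, Finset.mem_range]
  have hts : t ⊆ s := by
    intro b hb
    obtain ⟨j, hj, rfl⟩ := (hmem_t b).mp hb
    exact hf.1 j hj
  have htm : t.card = m := by
    rw [ht, Finset.card_image_of_injOn, Finset.card_range]
    intro i hi j hj hij
    exact hf.2.1 i (Finset.mem_range.mp hi) j (Finset.mem_range.mp hj) hij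
  -- neighbors of endpoints lie on the path
  have hHead : ∀ b ∈ s, G.Adj (f 0) b → b ∈ t := by
    intro b hb hab
    by_contra hbt
    obtain ⟨g, hg⟩ := path_cons G hf hb
      (fun i hi he => hbt ((hmem_t b).mpr ⟨i, hi, he⟩)) hab.symm
    have := hmax _ _ hg; omega
  have hLast : ∀ b ∈ s, G.Adj (f (m - 1)) b → b ∈ t := by
    intro b hb hab
    by_contra hbt
    obtain ⟨g, hg⟩ := path_snoc G hf hb
      (fun i hi he => hbt ((hmem_t b).mpr ⟨i, hi, he⟩)) hab (by omega)
    have := hmax _ _ hg; omega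
  -- rotation sets
  set A : Finset ℕ := (Finset.range (m - 1)).filter (fun i => G.Adj (f 0) (f (i + 1))) with hA
  set B : Finset ℕ := (Finset.range (m - 1)).filter (fun i => G.Adj (f (m - 1)) (f i)) with hB
  have hcardA : A.card = (s.filter (G.Adj (f 0))).card := by
    apply Finset.card_bij (fun i _ => f (i + 1))
    · intro a ha
      rw [hA, Finset.mem_filter, Finset.mem_range] at ha
      rw [Finset.mem_filter]
      exact ⟨hf.1 (a + 1) (by omega), ha.2⟩
    · intro a1 ha1 a2 ha2 he
      rw [hA, Finset.mem_filter, Finset.mem_range] at ha1 ha2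
      have := hf.2.1 (a1 + 1) (by omega) (a2 + 1) (by omega) he
      omega
    · intro b hb
      rw [Finset.mem_filter] at hb
      obtain ⟨j, hj, rfl⟩ := (hmem_t b).mp (hHead b hb.1 hb.2)
      have hj0 : j ≠ 0 := by
        intro h0; subst h0; exact G.loopless.irrefl _ hb.2
      refine ⟨j - 1, ?_, ?_⟩
      · rw [hA, Finset.mem_filter, Finset.mem_range]
        constructor
        · omega
        · have e : j - 1 + 1 = j := by omega
          rw [e]; exact hb.2
      · have e : j - 1 + 1 = j := by omega
        rw [e]
  have hcardB : B.card = (s.filter (G.Adj (f (m - 1)))).card := by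
    apply Finset.card_bij (fun i _ => f i)
    · intro a ha
      rw [hB, Finset.mem_filter, Finset.mem_range] at ha
      rw [Finset.mem_filter]
      exact ⟨hf.1 a (by omega), ha.2⟩
    · intro a1 ha1 a2 ha2 he
      rw [hB, Finset.mem_filter, Finset.mem_range] at ha1 ha2
      exact hf.2.1 a1 (by omega) a2 (by omega) he
    · intro b hb
      rw [Finset.mem_filter] at hb
      obtain ⟨j, hj, rfl⟩ := (hmem_t b).mp (hLast b hb.1 hb.2)
      have hj0 : j ≠ m - 1 := by
        intro h0; subst h0; exact G.loopless.irrefl _ hb.2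
      exact ⟨j, by rw [hB, Finset.mem_filter, Finset.mem_range]; exact ⟨by omega, hb.2⟩, rfl⟩
  have hd0 := hmin _ (hf.1 0 (by omega))
  have hdl := hmin _ (hf.1 (m - 1) (by omega))
  have hUB : (A ∪ B).card ≤ m - 1 := by
    have : A ∪ B ⊆ Finset.range (m - 1) := by
      apply Finset.union_subset <;> exact Finset.filter_subset _ _
    simpa using Finset.card_le_card this
  have hinter := Finset.card_union_add_card_inter A B
  have hI : (A ∩ B).Nonempty := by
    rw [← Finset.card_pos]
    omega
  obtain ⟨i, hi⟩ := hI
  rw [Finset.mem_inter, hA, hB, Finset.mem_filter, Finset.mem_filter, Finset.mem_range] at hi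
  obtain ⟨⟨him, hA'⟩, _, hB'⟩ := hi
  -- the rotated cycle
  set c : ℕ → Fin n := fun r => f (if r ≤ i then r else m + i - r) with hc
  have hσlt : ∀ r, r < m → (if r ≤ i then r else m + i - r) < m := by
    intro r hr; split <;> omega
  have hcmem : ∀ r, r < m → c r ∈ t := by
    intro r hr
    exact (hmem_t _).mpr ⟨_, hσlt r hr, rfl⟩
  have hcinj : ∀ r1, r1 < m → ∀ r2, r2 < m → c r1 = c r2 → r1 = r2 := by
    intro r1 h1 r2 h2 he
    have := hf.2.1 _ (hσlt r1 h1) _ (hσlt r2 h2) he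
    split_ifs at this <;> omega
  have hcsurj : ∀ b ∈ t, ∃ r, r < m ∧ c r = b := by
    intro b hb
    obtain ⟨j, hj, rfl⟩ := (hmem_t b).mp hb
    by_cases hji : j ≤ i
    · exact ⟨j, hj, by rw [hc]; simp only [if_pos hji]⟩
    · refine ⟨m + i - j, by omega, ?_⟩
      rw [hc]
      simp only [if_neg (show ¬ (m + i - j ≤ i) by omega)]
      congr 1
      omega
  have hC1 : ∀ r, r + 1 < m → G.Adj (c r) (c (r + 1)) := by
    intro r hr
    by_cases h1 : r + 1 ≤ i
    · rw [hc]
      simp only [if_pos h1, if_pos (show r ≤ i by omega)]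
      exact hf.2.2 r (by omega)
    · by_cases h2 : r ≤ i
      · rw [hc]
        simp only [if_pos h2, if_neg h1]
        have he : m + i - (r + 1) = m - 1 := by omega
        have he2 : r = i := by omega
        rw [he, he2]
        exact hB'.symm
      · rw [hc]
        simp only [if_neg h2, if_neg h1]
        have he : m + i - r = (m + i - (r + 1)) + 1 := by omega
        rw [he]
        exact (hf.2.2 _ (by omega)).symm
  have hC2 : G.Adj (c (m - 1)) (c 0) := by
    rw [hc]
    simp only [if_neg (show ¬ (m - 1 ≤ i) by omega), if_pos (Nat.zero_le i)]
    have he : m + i - (m - 1) = i + 1 := by omega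
    rw [he]
    exact hA'.symm
  have hC3 : ∀ x : ℕ, G.Adj (c (x % m)) (c ((x + 1) % m)) := by
    intro x
    have hm0 : 0 < m := by omega
    have hlt := Nat.mod_lt x hm0
    have e1 : (x + 1) % m = (x % m + 1) % m := by
      conv_lhs => rw [Nat.add_mod, Nat.mod_eq_of_lt (show 1 < m by omega)]
    rcases Nat.lt_or_ge (x % m + 1) m with h | h
    · rw [e1, Nat.mod_eq_of_lt h]
      exact hC1 _ h
    · have hx : x % m = m - 1 := by omega
      have e2 : (x + 1) % m = 0 := by
        rw [e1, hx, show m - 1 + 1 = m by omega, Nat.mod_self]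
      rw [e2, hx]
      exact hC2
  -- closure
  refine ⟨t, hts, ⟨f 0, (hmem_t _).mpr ⟨0, by omega, rfl⟩⟩, by omega, ?_⟩
  intro a ha b hb hab
  by_contra hbt
  obtain ⟨r0, hr0, hr0e⟩ := hcsurj a ha
  have hm0 : 0 < m := by omega
  have hg : IsPathOn G s (m + 1) (fun j => if j = 0 then b else c ((r0 + (j - 1)) % m)) := by
    refine ⟨?_, ?_, ?_⟩
    · intro j hj
      dsimp only
      by_cases hj0 : j = 0
      · rw [if_pos hj0]; exact hb
      · rw [if_neg hj0]
        exact hts (hcmem _ (Nat.mod_lt _ hm0))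
    · intro j1 h1 j2 h2 he
      dsimp only at he
      by_cases e1 : j1 = 0 <;> by_cases e2 : j2 = 0
      · omega
      · rw [if_pos e1, if_neg e2] at he
        exact absurd (he ▸ hcmem _ (Nat.mod_lt _ hm0)) hbt
      · rw [if_neg e1, if_pos e2] at he
        exact absurd (he ▸ hcmem _ (Nat.mod_lt _ hm0)) hbt
      · rw [if_neg e1, if_neg e2] at he
        have hmod := hcinj _ (Nat.mod_lt _ hm0) _ (Nat.mod_lt _ hm0) he
        have hmeq : Nat.ModEq m (r0 + (j1 - 1)) (r0 + (j2 - 1)) := hmod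
        have := Nat.ModEq.add_left_cancel' r0 hmeq
        have h3 : (j1 - 1) % m = (j2 - 1) % m := this
        rw [Nat.mod_eq_of_lt (by omega), Nat.mod_eq_of_lt (by omega)] at h3
        omega
    · intro j hj
      dsimp only
      by_cases hj0 : j = 0
      · subst hj0
        rw [if_pos rfl, if_neg (by omega : ¬ (0 + 1 = 0))]
        have e : (r0 + (0 + 1 - 1)) % m = r0 := by
          rw [Nat.add_zero, Nat.mod_eq_of_lt hr0]
        rw [e, hr0e]
        exact hab.symm
      · rw [if_neg hj0, if_neg (by omega : ¬ (j + 1 = 0))]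
        have e : r0 + (j + 1 - 1) = (r0 + (j - 1)) + 1 := by omega
        rw [e]
        exact hC3 _
  have := hmax _ _ hg
  omega

lemma sum_nbr_erase [DecidableRel G.Adj] (s : Finset (Fin n)) (v : Fin n) (hv : v ∈ s) :
    ∑ a ∈ s, (s.filter (G.Adj a)).card
      = (∑ a ∈ s.erase v, ((s.erase v).filter (G.Adj a)).card)
        + 2 * (s.filter (G.Adj v)).card := by
  classical
  have hsplit : ∑ a ∈ s, (s.filter (G.Adj a)).card
      = (∑ a ∈ s.erase v, (s.filter (G.Adj a)).card) + (s.filter (G.Adj v)).card := by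
    rw [Finset.sum_erase_add s _ hv]
  have hpt : ∀ a ∈ s.erase v, (s.filter (G.Adj a)).card
      = ((s.erase v).filter (G.Adj a)).card + (if G.Adj a v then 1 else 0) := by
    intro a ha
    rw [Finset.filter_erase]
    by_cases hav : G.Adj a v
    · rw [if_pos hav]
      have hvmem : v ∈ s.filter (G.Adj a) := Finset.mem_filter.mpr ⟨hv, hav⟩
      rw [Finset.card_erase_of_mem hvmem]
      have : 0 < (s.filter (G.Adj a)).card := Finset.card_pos.mpr ⟨v, hvmem⟩
      omega
    · rw [if_neg hav, Finset.erase_eq_of_notMem (fun hmem => hav (Finset.mem_filter.mp hmem).2)]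
      omega
  have hsum2 : ∑ a ∈ s.erase v, (s.filter (G.Adj a)).card
      = (∑ a ∈ s.erase v, ((s.erase v).filter (G.Adj a)).card)
        + ∑ a ∈ s.erase v, (if G.Adj a v then 1 else 0) := by
    rw [← Finset.sum_add_distrib]
    exact Finset.sum_congr rfl hpt
  have hlast : (∑ a ∈ s.erase v, (if G.Adj a v then 1 else 0))
      = (s.filter (G.Adj v)).card := by
    rw [← Finset.card_filter]
    apply Finset.card_bij (fun a _ => a) ?_ (fun a b _ _ h => h) ?_
    · intro a ha
      rw [Finset.mem_filter, Finset.mem_erase] at ha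
      exact Finset.mem_filter.mpr ⟨ha.1.2, ha.2.symm⟩
    · intro b hb
      rw [Finset.mem_filter] at hb
      refine ⟨b, Finset.mem_filter.mpr ⟨Finset.mem_erase.mpr ⟨G.ne_of_adj hb.2.symm, hb.1⟩, hb.2.symm⟩, rfl⟩
  omega


lemma sum_nbr_split [DecidableRel G.Adj] (s t : Finset (Fin n)) (hts : t ⊆ s)
    (hcl : ∀ a ∈ t, ∀ b ∈ s, G.Adj a b → b ∈ t) :
    ∑ a ∈ s, (s.filter (G.Adj a)).card
      = (∑ a ∈ t, (t.filter (G.Adj a)).card)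
        + ∑ a ∈ s \ t, ((s \ t).filter (G.Adj a)).card := by
  classical
  rw [← Finset.sum_sdiff hts, add_comm]
  congr 1
  · apply Finset.sum_congr rfl
    intro a ha
    congr 1
    ext b
    simp only [Finset.mem_filter]
    exact ⟨fun ⟨hb, hadj⟩ => ⟨hcl a ha b hb hadj, hadj⟩, fun ⟨hb, hadj⟩ => ⟨hts hb, hadj⟩⟩
  · apply Finset.sum_congr rfl
    intro a ha
    rw [Finset.mem_sdiff] at ha
    congr 1
    ext b
    simp only [Finset.mem_filter, Finset.mem_sdiff]
    constructor
    · rintro ⟨hb, hadj⟩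
      refine ⟨⟨hb, fun hbt => ha.2 ?_⟩, hadj⟩
      exact hcl b hbt a ha.1 hadj.symm
    · rintro ⟨⟨hb, _⟩, hadj⟩
      exact ⟨hb, hadj⟩

lemma erdos_gallai_sum (hk : 2 ≤ k) (hG : ¬ ContainsCopy G (pathG k)) [DecidableRel G.Adj] :
    ∀ N (s : Finset (Fin n)), s.card ≤ N →
      ∑ a ∈ s, (s.filter (G.Adj a)).card ≤ (k - 2) * s.card := by
  intro N
  induction N with
  | zero =>
    intro s hs
    have : s = ∅ := Finset.card_eq_zero.mp (by omega)
    subst this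
    simp
  | succ N ih =>
    intro s hs
    rcases s.eq_empty_or_nonempty with rfl | hne
    · simp
    by_cases hmin : ∀ v ∈ s, k - 1 ≤ 2 * (s.filter (G.Adj v)).card
    · obtain ⟨t, hts, htne, htk, hcl⟩ := key_closed G hk hG s hne hmin
      rw [sum_nbr_split G s t hts hcl]
      have h1 : (∑ a ∈ t, (t.filter (G.Adj a)).card) ≤ (k - 2) * t.card := by
        have hb : ∀ a ∈ t, (t.filter (G.Adj a)).card ≤ k - 2 := by
          intro a ha
          have hsub : t.filter (G.Adj a) ⊆ t.erase a := by
            intro b hb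
            rw [Finset.mem_filter] at hb
            exact Finset.mem_erase.mpr ⟨(G.ne_of_adj hb.2).symm, hb.1⟩
          have := Finset.card_le_card hsub
          rw [Finset.card_erase_of_mem ha] at this
          omega
        calc (∑ a ∈ t, (t.filter (G.Adj a)).card) ≤ ∑ _a ∈ t, (k - 2) :=
              Finset.sum_le_sum hb
          _ = t.card * (k - 2) := by rw [Finset.sum_const, smul_eq_mul]
          _ = (k - 2) * t.card := Nat.mul_comm _ _
      have h2 : (∑ a ∈ s \ t, ((s \ t).filter (G.Adj a)).card) ≤ (k - 2) * (s \ t).card := by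
        apply ih
        have := Finset.card_sdiff_of_subset hts
        have := Finset.card_le_card hts
        have := Finset.card_pos.mpr htne
        omega
      have hcards : (s \ t).card = s.card - t.card := Finset.card_sdiff_of_subset hts
      have htles := Finset.card_le_card hts
      calc (∑ a ∈ t, (t.filter (G.Adj a)).card)
            + ∑ a ∈ s \ t, ((s \ t).filter (G.Adj a)).card
          ≤ (k - 2) * t.card + (k - 2) * (s \ t).card := Nat.add_le_add h1 h2
        _ = (k - 2) * (t.card + (s \ t).card) := (Nat.mul_add _ _ _).symm
        _ = (k - 2) * s.card := by rw [hcards]; congr 1; omega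
    · push_neg at hmin
      obtain ⟨v, hv, hd⟩ := hmin
      rw [sum_nbr_erase G s v hv]
      have h1 : (∑ a ∈ s.erase v, ((s.erase v).filter (G.Adj a)).card)
          ≤ (k - 2) * (s.erase v).card := by
        apply ih
        rw [Finset.card_erase_of_mem hv]
        have := Finset.card_pos.mpr ⟨v, hv⟩
        omega
      rw [Finset.card_erase_of_mem hv] at h1
      have hc1 : 1 ≤ s.card := Finset.card_pos.mpr ⟨v, hv⟩
      have h2 : 2 * (s.filter (G.Adj v)).card ≤ k - 2 := by omega
      calc (∑ a ∈ s.erase v, ((s.erase v).filter (G.Adj a)).card)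
            + 2 * (s.filter (G.Adj v)).card
          ≤ (k - 2) * (s.card - 1) + (k - 2) := Nat.add_le_add h1 h2
        _ = (k - 2) * (s.card - 1 + 1) := by rw [Nat.mul_add, Nat.mul_one]
        _ = (k - 2) * s.card := by congr 1; omega

end ErdosGallai
theorem statement_17 (n k : ℕ) (hk : 2 ≤ k) (hkn : k ≤ n)
    (G : SimpleGraph (Fin n)) (hG : ¬ ContainsCopy G (pathG k)) :
    ((G.edgeSet.ncard : ℕ) : ℝ) ≤ ((k : ℝ) - 2) * (n : ℝ) / 2 := by
  classical
  have hsum := erdos_gallai_sum G hk hG (Finset.univ.card) Finset.univ le_rfl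
  have hdeg : ∀ a : Fin n, (Finset.univ.filter (G.Adj a)).card = G.degree a := by
    intro a
    rw [← SimpleGraph.neighborFinset_eq_filter, SimpleGraph.degree]
  have hsum2 : ∑ a : Fin n, G.degree a ≤ (k - 2) * n := by
    calc ∑ a : Fin n, G.degree a = ∑ a ∈ Finset.univ, (Finset.univ.filter (G.Adj a)).card :=
          Finset.sum_congr rfl (fun a _ => (hdeg a).symm)
      _ ≤ (k - 2) * Finset.univ.card := hsum
      _ = (k - 2) * n := by rw [Finset.card_univ, Fintype.card_fin]
  rw [SimpleGraph.sum_degrees_eq_twice_card_edges] at hsum2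
  have hE : G.edgeSet.ncard = G.edgeFinset.card := by
    rw [SimpleGraph.edgeFinset, Set.ncard_eq_toFinset_card']
  rw [hE]
  have hnat : 2 * G.edgeFinset.card ≤ (k - 2) * n := hsum2
  have hreal : ((2 * G.edgeFinset.card : ℕ) : ℝ) ≤ (((k - 2) * n : ℕ) : ℝ) :=
    Nat.cast_le.mpr hnat
  rw [Nat.cast_mul, Nat.cast_mul, Nat.cast_sub hk] at hreal
  push_cast at hreal ⊢
  linarith
end
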